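/- Let {U_k}_{k>=1} be a stationary sequence of m-dependent, almost surely negative real random variables, and fix alpha in (0,1). Then there exists r > 0 such that limsup_{n→∞} (1/n) log P( sum_{k = n - ⌈alpha n⌉ + 1}^{n} U_{n,k} >= -r n ) < 0, where U_{n,1} <= ... <= U_{n,n} are the order statistics of U_1,...,U_n. -/

import Mathlib

open MeasureTheory ProbabilityTheory Filter
open scoped ENNReal


lemma stmt10_chain {Ω : Type*} [MeasurableSpace Ω] (μ : Measure Ω) [IsProbabilityMeasure μ]
    (U : ℕ → Ω → ℝ) (m : ℕ)
    (hdep : ∀ j : ℕ,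
      Indep (⨆ i ∈ Set.Icc 1 j, MeasurableSpace.comap (U i) inferInstance)
        (⨆ i ∈ Set.Ici (j + m + 1), MeasurableSpace.comap (U i) inferInstance) μ)
    (c : ℝ) (p : ℝ≥0∞) :
    ∀ n : ℕ, ∀ S : Finset ℕ, S.card = n → (∀ k ∈ S, 1 ≤ k) →
      (∀ i ∈ S, ∀ j ∈ S, i % (m + 1) = j % (m + 1)) →
      (∀ k ∈ S, μ {ω | -c ≤ U k ω} = p) →
      μ (⋂ k ∈ S, {ω | -c ≤ U k ω}) ≤ p ^ S.card := by
  intro n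
  induction n with
  | zero =>
    intro S hcard _ _ _
    rw [Finset.card_eq_zero.mp hcard]
    simp
  | succ n ih =>
    intro S hcard h1 hres heq
    have hne : S.Nonempty := Finset.card_pos.mp (by omega)
    set a := S.min' hne with ha
    have haS : a ∈ S := S.min'_mem hne
    have ha1 : 1 ≤ a := h1 a haS
    have hsub : (⋂ k ∈ S, {ω | -c ≤ U k ω}) =
        {ω | -c ≤ U a ω} ∩ ⋂ k ∈ S.erase a, {ω | -c ≤ U k ω} := by
      conv_lhs => rw [← Finset.insert_erase haS]
      simp
    have hA : MeasurableSet[⨆ i ∈ Set.Icc 1 a, MeasurableSpace.comap (U i) inferInstance]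
        {ω | -c ≤ U a ω} := by
      have hmem : MeasurableSet[MeasurableSpace.comap (U a) inferInstance] {ω | -c ≤ U a ω} :=
        ⟨Set.Ici (-c), measurableSet_Ici, rfl⟩
      have hle : MeasurableSpace.comap (U a) inferInstance ≤
          ⨆ i ∈ Set.Icc 1 a, MeasurableSpace.comap (U i) inferInstance :=
        le_iSup₂ (f := fun i (_ : i ∈ Set.Icc 1 a) => MeasurableSpace.comap (U i) inferInstance)
          a ⟨ha1, le_refl a⟩
      exact hle _ hmem
    have hB : MeasurableSet[⨆ i ∈ Set.Ici (a + m + 1), MeasurableSpace.comap (U i) inferInstance]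
        (⋂ k ∈ S.erase a, {ω | -c ≤ U k ω}) := by
      refine MeasurableSet.biInter (Set.to_countable _) (fun k hk => ?_)
      have hkS : k ∈ S := Finset.mem_of_mem_erase hk
      have hka : a + m + 1 ≤ k := by
        have hne' : k ≠ a := Finset.ne_of_mem_erase hk
        have hle : a ≤ k := S.min'_le k hkS
        have hlt : a < k := lt_of_le_of_ne hle (Ne.symm hne')
        have hmod : a ≡ k [MOD m + 1] := hres a haS k hkS
        have hdvd : (m + 1) ∣ k - a := (Nat.modEq_iff_dvd' hle).mp hmod
        have := Nat.le_of_dvd (by omega) hdvd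
        omega
      have hmem : MeasurableSet[MeasurableSpace.comap (U k) inferInstance] {ω | -c ≤ U k ω} :=
        ⟨Set.Ici (-c), measurableSet_Ici, rfl⟩
      have hle : MeasurableSpace.comap (U k) inferInstance ≤
          ⨆ i ∈ Set.Ici (a + m + 1), MeasurableSpace.comap (U i) inferInstance :=
        le_iSup₂ (f := fun i (_ : i ∈ Set.Ici (a + m + 1)) =>
          MeasurableSpace.comap (U i) inferInstance) k hka
      exact hle _ hmem
    have hind := (Indep_iff _ _ μ).mp (hdep a) _ _ hA hB
    have hcard' : (S.erase a).card = n := by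
      rw [Finset.card_erase_of_mem haS]; omega
    have hrec := ih (S.erase a) hcard'
      (fun k hk => h1 k (Finset.mem_of_mem_erase hk))
      (fun i hi j hj => hres i (Finset.mem_of_mem_erase hi) j (Finset.mem_of_mem_erase hj))
      (fun k hk => heq k (Finset.mem_of_mem_erase hk))
    rw [hcard'] at hrec
    rw [hsub, hind, heq a haS, hcard, pow_succ, mul_comm _ p]
    exact mul_le_mul_right hrec p

lemma stmt10_stat {Ω : Type*} [MeasurableSpace Ω] (μ : Measure Ω)
    (U : ℕ → Ω → ℝ) (hmeas : ∀ k, Measurable (U k))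
    (hstat : ∀ j : ℕ,
      Measure.map (fun ω => fun i : ℕ => U (i + 1 + j) ω) μ =
        Measure.map (fun ω => fun i : ℕ => U (i + 1) ω) μ)
    (c : ℝ) (k : ℕ) (hk : 1 ≤ k) :
    μ {ω | -c ≤ U k ω} = μ {ω | -c ≤ U 1 ω} := by
  have hmf : ∀ j : ℕ, Measurable (fun ω => fun i : ℕ => U (i + 1 + j) ω) :=
    fun j => measurable_pi_lambda _ (fun i => hmeas _)
  have hmf0 : Measurable (fun ω => fun i : ℕ => U (i + 1) ω) :=
    measurable_pi_lambda _ (fun i => hmeas _)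
  have hset : MeasurableSet {f : ℕ → ℝ | -c ≤ f 0} :=
    measurableSet_le measurable_const (measurable_pi_apply 0)
  have h1 := congrArg (fun ν : Measure (ℕ → ℝ) => ν {f : ℕ → ℝ | -c ≤ f 0}) (hstat (k - 1))
  rw [Measure.map_apply (hmf _) hset, Measure.map_apply hmf0 hset] at h1
  have e1 : (fun ω => fun i : ℕ => U (i + 1 + (k - 1)) ω) ⁻¹' {f : ℕ → ℝ | -c ≤ f 0}
      = {ω | -c ≤ U k ω} := by
    ext ω
    simp only [Set.mem_preimage, Set.mem_setOf_eq]
    have : 0 + 1 + (k - 1) = k := by omega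
    rw [this]
  have e2 : (fun ω => fun i : ℕ => U (i + 1) ω) ⁻¹' {f : ℕ → ℝ | -c ≤ f 0}
      = {ω | -c ≤ U 1 ω} := by
    ext ω
    simp only [Set.mem_preimage, Set.mem_setOf_eq]
  rw [e1, e2] at h1
  exact h1


lemma stmt10_det (m n : ℕ) (α c : ℝ) (hα0 : 0 < α) (hα1 : α < 1) (hc : 0 < c) (hn : 1 ≤ n)
    (g : ℕ → ℝ) (hneg : ∀ k ∈ Finset.Icc 1 n, g k < 0)
    (hev : -(c * α / 2 * n) ≤ ⨆ T : {T : Finset ℕ //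
      T ⊆ Finset.Icc 1 n ∧ T.card = Nat.ceil (α * n)}, ∑ k ∈ T.1, g k) :
    ∃ S : Finset ℕ, S ⊆ Finset.Icc 1 n ∧ S.card = ⌈α / 2 * n / (m + 1)⌉₊ ∧
      (∀ i ∈ S, ∀ j ∈ S, i % (m + 1) = j % (m + 1)) ∧ ∀ k ∈ S, -c ≤ g k := by
  classical
  have hcardIcc : (Finset.Icc 1 n).card = n := by rw [Nat.card_Icc]; omega
  have hceil_le : Nat.ceil (α * n) ≤ n :=
    Nat.ceil_le.mpr (mul_le_of_le_one_left (by positivity) hα1.le)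
  -- the index type is finite and nonempty
  haveI hfin : Finite {T : Finset ℕ // T ⊆ Finset.Icc 1 n ∧ T.card = Nat.ceil (α * n)} := by
    refine Finite.of_injective (fun T => (⟨T.1, Finset.mem_powerset.mpr T.2.1⟩ :
      {T // T ∈ (Finset.Icc 1 n).powerset})) ?_
    intro T₁ T₂ h
    have hv := congrArg Subtype.val h
    simp only at hv
    exact Subtype.ext hv
  haveI hnonempty : Nonempty {T : Finset ℕ // T ⊆ Finset.Icc 1 n ∧ T.card = Nat.ceil (α * n)} := by
    obtain ⟨T, hT, hTc⟩ := Finset.exists_subset_card_eq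
      (show Nat.ceil (α * n) ≤ (Finset.Icc 1 n).card by rw [hcardIcc]; exact hceil_le)
    exact ⟨⟨T, hT, hTc⟩⟩
  obtain ⟨T₀, hmax⟩ := Finite.exists_max (fun T : {T : Finset ℕ //
      T ⊆ Finset.Icc 1 n ∧ T.card = Nat.ceil (α * n)} => ∑ k ∈ T.1, g k)
  have hsum : -(c * α / 2 * n) ≤ ∑ k ∈ T₀.1, g k := le_trans hev (ciSup_le hmax)
  set A := T₀.1.filter (fun k => -c ≤ g k) with hA
  set B := T₀.1.filter (fun k => ¬(-c ≤ g k)) with hB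
  have hsplit : ∑ k ∈ A, g k + ∑ k ∈ B, g k = ∑ k ∈ T₀.1, g k :=
    Finset.sum_filter_add_sum_filter_not _ _ _
  have hsA : ∑ k ∈ A, g k ≤ 0 :=
    Finset.sum_nonpos (fun k hk => (hneg k (T₀.2.1 (Finset.filter_subset _ _ hk))).le)
  have hsB : ∑ k ∈ B, g k ≤ (B.card : ℝ) * (-c) := by
    have := Finset.sum_le_card_nsmul B g (-c)
      (fun x hx => (not_le.mp (Finset.mem_filter.mp hx).2).le)
    rwa [nsmul_eq_mul] at this
  have hBcard : (B.card : ℝ) ≤ α / 2 * n := by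
    nlinarith [hsum, hsA, hsB, hsplit]
  have hABcard : A.card + B.card = Nat.ceil (α * n) := by
    rw [hA, hB, Finset.card_filter_add_card_filter_not, T₀.2.2]
  have hAcard : α / 2 * n ≤ (A.card : ℝ) := by
    have h1 : (α * n : ℝ) ≤ (Nat.ceil (α * n) : ℝ) := Nat.le_ceil _
    have h2 : (A.card : ℝ) + (B.card : ℝ) = (Nat.ceil (α * n) : ℝ) := by
      exact_mod_cast congrArg (Nat.cast (R := ℝ)) hABcard
    linarith
  -- pigeonhole over residues mod (m+1)
  set s₁ := ⌈α / 2 * n / (m + 1)⌉₊ with hs₁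
  have hs₁pos : 1 ≤ s₁ := Nat.one_le_iff_ne_zero.mpr (by
    rw [hs₁]
    exact Nat.ceil_pos.mpr (by positivity) |>.ne')
  have hfiber : A.card = ∑ i ∈ Finset.range (m + 1),
      (A.filter (fun k => k % (m + 1) = i)).card :=
    Finset.card_eq_sum_card_fiberwise (fun x _ => Finset.mem_range.mpr (Nat.mod_lt _ (by omega)))
  have hpigeon : ∃ i ∈ Finset.range (m + 1), s₁ ≤ (A.filter (fun k => k % (m + 1) = i)).card := by
    by_contra hcon
    push_neg at hcon
    have hle : A.card + (m + 1) ≤ (m + 1) * s₁ := by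
      have h1 : ∑ i ∈ Finset.range (m + 1), ((A.filter (fun k => k % (m + 1) = i)).card + 1)
          ≤ ∑ _i ∈ Finset.range (m + 1), s₁ := Finset.sum_le_sum (fun i hi => hcon i hi)
      rw [Finset.sum_add_distrib, Finset.sum_const, Finset.sum_const, Finset.card_range,
        smul_eq_mul, smul_eq_mul, mul_one, ← hfiber] at h1
      omega
    have hcast : (A.card : ℝ) + ((m : ℝ) + 1) ≤ ((m : ℝ) + 1) * (s₁ : ℝ) := by
      exact_mod_cast hle
    have hceil : (s₁ : ℝ) < α / 2 * n / ((m : ℝ) + 1) + 1 := Nat.ceil_lt_add_one (by positivity)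
    have hm1 : (0 : ℝ) < (m : ℝ) + 1 := by positivity
    have hdiv : ((m : ℝ) + 1) * (α / 2 * n / ((m : ℝ) + 1)) = α / 2 * n := by field_simp
    nlinarith [mul_lt_mul_of_pos_left hceil hm1]
  obtain ⟨i, _, hi⟩ := hpigeon
  obtain ⟨S, hSsub, hScard⟩ := Finset.exists_subset_card_eq hi
  refine ⟨S, ?_, hScard, ?_, ?_⟩
  · exact fun k hk => T₀.2.1 (Finset.filter_subset _ _ (Finset.filter_subset _ _ (hSsub hk)))
  · intro a ha b hb
    rw [(Finset.mem_filter.mp (hSsub ha)).2, (Finset.mem_filter.mp (hSsub hb)).2]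
  · intro k hk
    exact (Finset.mem_filter.mp (Finset.filter_subset _ _ (hSsub hk))).2

theorem stmt10 {Ω : Type*} [MeasurableSpace Ω] (μ : Measure Ω)
    [IsProbabilityMeasure μ]
    (U : ℕ → Ω → ℝ) (hmeas : ∀ k, Measurable (U k))
    (m : ℕ) (hm : 0 < m)
    (hstat : ∀ j : ℕ,
      Measure.map (fun ω => fun i : ℕ => U (i + 1 + j) ω) μ =
        Measure.map (fun ω => fun i : ℕ => U (i + 1) ω) μ)
    (hdep : ∀ j : ℕ,
      Indep (⨆ i ∈ Set.Icc 1 j, MeasurableSpace.comap (U i) inferInstance)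
        (⨆ i ∈ Set.Ici (j + m + 1), MeasurableSpace.comap (U i) inferInstance) μ)
    (hneg : ∀ k, 1 ≤ k → ∀ᵐ ω ∂μ, U k ω < 0)
    (α : ℝ) (hα0 : 0 < α) (hα1 : α < 1) :
    ∃ r : ℝ, 0 < r ∧
      limsup (fun n : ℕ => ((n : EReal))⁻¹ *
        ENNReal.log (μ {ω |
          -(r * n) ≤ ⨆ T : {T : Finset ℕ //
            T ⊆ Finset.Icc 1 n ∧ T.card = Nat.ceil (α * n)},
            ∑ k ∈ T.1, U k ω})) atTop < 0 := by
  classical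
  set L : ℝ := -(((m : ℝ) + 1) * (Real.log 2 + 1)) / (α / 2) with hLdef
  set δ : ℝ := Real.exp L with hδdef
  have hδ0 : (0 : ℝ) < δ := Real.exp_pos _
  have hlog2 : (0 : ℝ) < Real.log 2 := Real.log_pos (by norm_num)
  have hL : L < 0 := by
    rw [hLdef]
    apply div_neg_of_neg_of_pos
    · nlinarith
    · positivity
  -- choose c with small tail probability
  obtain ⟨c, hc0, hp⟩ : ∃ c : ℝ, 0 < c ∧ μ {ω | -c ≤ U 1 ω} ≤ ENNReal.ofReal δ := by
    set s : ℕ → Set Ω := fun k => {ω | -(1 / ((k : ℝ) + 1)) ≤ U 1 ω} with hs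
    have hmeas_s : ∀ k, NullMeasurableSet (s k) μ := fun k =>
      (measurableSet_le measurable_const (hmeas 1)).nullMeasurableSet
    have hanti : Antitone s := by
      intro k l hkl ω hω
      have h1 : (1 : ℝ) / ((l : ℝ) + 1) ≤ 1 / ((k : ℝ) + 1) := by
        apply one_div_le_one_div_of_le
        · positivity
        · have : (k : ℝ) ≤ (l : ℝ) := by exact_mod_cast hkl
          linarith
      exact le_trans (neg_le_neg h1) hω
    have hiInter : (⋂ k, s k) = {ω | 0 ≤ U 1 ω} := by
      ext ω
      simp only [hs, Set.mem_iInter, Set.mem_setOf_eq]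
      constructor
      · intro h
        by_contra hlt
        push_neg at hlt
        obtain ⟨k, hk⟩ := exists_nat_one_div_lt (show (0 : ℝ) < -U 1 ω by linarith)
        have := h k
        linarith
      · intro h k
        have h2 : (0 : ℝ) ≤ 1 / ((k : ℝ) + 1) := by positivity
        linarith
    have hzero : μ {ω | 0 ≤ U 1 ω} = 0 := by
      have h := hneg 1 le_rfl
      rw [ae_iff] at h
      have heq : {ω | 0 ≤ U 1 ω} = {ω | ¬ U 1 ω < 0} := by ext ω; simp [not_lt]
      rw [heq]
      exact h
    have htend := tendsto_measure_iInter_atTop hmeas_s hanti ⟨0, measure_ne_top μ _⟩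
    rw [hiInter, hzero] at htend
    have hlt : (0 : ℝ≥0∞) < ENNReal.ofReal δ := ENNReal.ofReal_pos.mpr hδ0
    obtain ⟨k, hk⟩ := (htend.eventually (gt_mem_nhds hlt)).exists
    exact ⟨1 / ((k : ℝ) + 1), by positivity, le_of_lt hk⟩
  refine ⟨c * α / 2, by positivity, ?_⟩
  set p : ℝ≥0∞ := μ {ω | -c ≤ U 1 ω} with hpdef
  set s₁ : ℕ → ℕ := fun n => ⌈α / 2 * n / ((m : ℝ) + 1)⌉₊ with hs₁def
  -- the key per-n bound
  have key : ∀ n : ℕ, 1 ≤ n →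
      μ {ω | -(c * α / 2 * n) ≤ ⨆ T : {T : Finset ℕ //
          T ⊆ Finset.Icc 1 n ∧ T.card = Nat.ceil (α * n)}, ∑ k ∈ T.1, U k ω}
        ≤ ENNReal.ofReal (Real.exp (-(n : ℝ))) := by
    intro n hn
    set 𝒮 : Finset (Finset ℕ) := (Finset.Icc 1 n).powerset.filter
      (fun S => S.card = s₁ n ∧ ∀ i ∈ S, ∀ j ∈ S, i % (m + 1) = j % (m + 1)) with h𝒮
    set Bad : Set Ω := {ω | ¬ ∀ k ∈ Finset.Icc 1 n, U k ω < 0} with hBadDef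
    have hBad : μ Bad = 0 := by
      have hsub : Bad ⊆ ⋃ k ∈ Finset.Icc 1 n, {ω | ¬ U k ω < 0} := by
        intro ω hω
        rw [hBadDef, Set.mem_setOf_eq] at hω
        push_neg at hω
        obtain ⟨k, hk1, hk2⟩ := hω
        exact Set.mem_iUnion₂.mpr ⟨k, hk1, by simp [not_lt, hk2]⟩
      refine le_antisymm (le_trans (measure_mono hsub) ?_) zero_le
      refine le_trans (measure_biUnion_finset_le _ _) ?_
      rw [Finset.sum_eq_zero (fun k hk => ae_iff.mp (hneg k (Finset.mem_Icc.mp hk).1))]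
    have hincl : {ω | -(c * α / 2 * n) ≤ ⨆ T : {T : Finset ℕ //
          T ⊆ Finset.Icc 1 n ∧ T.card = Nat.ceil (α * n)}, ∑ k ∈ T.1, U k ω}
        ⊆ (⋃ S ∈ 𝒮, {ω | ∀ k ∈ S, -c ≤ U k ω}) ∪ Bad := by
      intro ω hω
      by_cases hg : ∀ k ∈ Finset.Icc 1 n, U k ω < 0
      · left
        obtain ⟨S, hS1, hS2, hS3, hS4⟩ :=
          stmt10_det m n α c hα0 hα1 hc0 hn (fun k => U k ω) hg hω
        refine Set.mem_iUnion₂.mpr ⟨S, ?_, hS4⟩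
        rw [h𝒮]
        exact Finset.mem_filter.mpr ⟨Finset.mem_powerset.mpr hS1, hS2, hS3⟩
      · right
        rw [hBadDef]
        exact hg
    have hstep : μ {ω | -(c * α / 2 * n) ≤ ⨆ T : {T : Finset ℕ //
          T ⊆ Finset.Icc 1 n ∧ T.card = Nat.ceil (α * n)}, ∑ k ∈ T.1, U k ω}
        ≤ (𝒮.card : ℝ≥0∞) * p ^ (s₁ n) := by
      refine le_trans (measure_mono hincl) (le_trans (measure_union_le _ _) ?_)
      rw [hBad, add_zero]
      refine le_trans (measure_biUnion_finset_le _ _) ?_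
      have hperS : ∀ S ∈ 𝒮, μ {ω | ∀ k ∈ S, -c ≤ U k ω} ≤ p ^ (s₁ n) := by
        intro S hS
        rw [h𝒮, Finset.mem_filter] at hS
        have hSsub := hS.1
        have hScard := hS.2.1
        have hSres := hS.2.2
        have hset : {ω | ∀ k ∈ S, -c ≤ U k ω} = ⋂ k ∈ S, {ω | -c ≤ U k ω} := by
          ext ω; simp
        rw [hset, ← hScard]
        exact stmt10_chain μ U m hdep c p S.card S rfl
          (fun k hk => (Finset.mem_Icc.mp (Finset.mem_powerset.mp hSsub hk)).1)
          hSres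
          (fun k hk => stmt10_stat μ U hmeas hstat c k
            (Finset.mem_Icc.mp (Finset.mem_powerset.mp hSsub hk)).1)
      refine le_trans (Finset.sum_le_sum hperS) ?_
      rw [Finset.sum_const, nsmul_eq_mul]
    have hScardle : (𝒮.card : ℝ≥0∞) ≤ 2 ^ n := by
      have h1 : 𝒮.card ≤ 2 ^ n := by
        refine le_trans (Finset.card_filter_le _ _) ?_
        rw [Finset.card_powerset, Nat.card_Icc]
        exact Nat.pow_le_pow_right (by norm_num) (by omega)
      calc (𝒮.card : ℝ≥0∞) ≤ ((2 ^ n : ℕ) : ℝ≥0∞) := by exact_mod_cast h1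
        _ = 2 ^ n := by push_cast; ring
    have hpow : p ^ (s₁ n) ≤ ENNReal.ofReal (δ ^ (s₁ n)) := by
      rw [ENNReal.ofReal_pow hδ0.le]
      exact pow_le_pow_left' hp _
    have hreal : (2 : ℝ) ^ n * δ ^ (s₁ n) ≤ Real.exp (-(n : ℝ)) := by
      have hs₁ge : α / 2 * n / ((m : ℝ) + 1) ≤ (s₁ n : ℝ) := Nat.le_ceil _
      have hδpow : δ ^ (s₁ n) = Real.exp ((s₁ n : ℝ) * L) := by
        rw [hδdef, ← Real.exp_nat_mul]
      have h2pow : (2 : ℝ) ^ n = Real.exp ((n : ℝ) * Real.log 2) := by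
        rw [Real.exp_nat_mul, Real.exp_log (by norm_num : (0:ℝ) < 2)]
      rw [hδpow, h2pow, ← Real.exp_add]
      apply Real.exp_le_exp.mpr
      have hmul : (s₁ n : ℝ) * L ≤ (α / 2 * n / ((m : ℝ) + 1)) * L :=
        mul_le_mul_of_nonpos_right hs₁ge hL.le
      have hid : (α / 2 * n / ((m : ℝ) + 1)) * L = -((n : ℝ) * (Real.log 2 + 1)) := by
        rw [hLdef]
        field_simp
      rw [hid] at hmul
      linarith
    calc μ {ω | -(c * α / 2 * n) ≤ ⨆ T : {T : Finset ℕ //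
          T ⊆ Finset.Icc 1 n ∧ T.card = Nat.ceil (α * n)}, ∑ k ∈ T.1, U k ω}
        ≤ (𝒮.card : ℝ≥0∞) * p ^ (s₁ n) := hstep
      _ ≤ (2 : ℝ≥0∞) ^ n * ENNReal.ofReal (δ ^ (s₁ n)) := mul_le_mul' hScardle hpow
      _ = ENNReal.ofReal ((2 : ℝ) ^ n * δ ^ (s₁ n)) := by
          rw [ENNReal.ofReal_mul (by positivity), ENNReal.ofReal_pow (by norm_num : (0:ℝ) ≤ 2)]
          norm_num
      _ ≤ ENNReal.ofReal (Real.exp (-(n : ℝ))) := ENNReal.ofReal_le_ofReal hreal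
  -- conclude via the limsup
  have hev2 : ∀ᶠ n : ℕ in atTop, ((n : ℕ) : EReal)⁻¹ *
      ENNReal.log (μ {ω | -(c * α / 2 * n) ≤ ⨆ T : {T : Finset ℕ //
        T ⊆ Finset.Icc 1 n ∧ T.card = Nat.ceil (α * n)}, ∑ k ∈ T.1, U k ω})
      ≤ ((-1 : ℝ) : EReal) := by
    filter_upwards [eventually_ge_atTop 1] with n hn
    have hb := key n hn
    have hlog : ENNReal.log (μ {ω | -(c * α / 2 * n) ≤ ⨆ T : {T : Finset ℕ //
        T ⊆ Finset.Icc 1 n ∧ T.card = Nat.ceil (α * n)}, ∑ k ∈ T.1, U k ω})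
        ≤ ((-(n : ℝ)) : EReal) := by
      have h2 := ENNReal.log_monotone hb
      rwa [ENNReal.log_ofReal, if_neg (not_le.mpr (Real.exp_pos _)), Real.log_exp] at h2
    have hnonneg : (0 : EReal) ≤ ((n : ℕ) : EReal)⁻¹ := by
      rw [← EReal.coe_coe_eq_natCast, ← EReal.coe_inv]
      exact EReal.coe_nonneg.mpr (by positivity)
    calc ((n : ℕ) : EReal)⁻¹ * ENNReal.log (μ {ω | -(c * α / 2 * n) ≤ ⨆ T : {T : Finset ℕ //
          T ⊆ Finset.Icc 1 n ∧ T.card = Nat.ceil (α * n)}, ∑ k ∈ T.1, U k ω})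
        ≤ ((n : ℕ) : EReal)⁻¹ * ((-(n : ℝ)) : EReal) := mul_le_mul_of_nonneg_left hlog hnonneg
      _ = ((-1 : ℝ) : EReal) := by
          rw [← EReal.coe_coe_eq_natCast, ← EReal.coe_inv, ← EReal.coe_neg, ← EReal.coe_mul]
          congr 1
          have hn0 : (n : ℝ) ≠ 0 := by positivity
          field_simp
  refine lt_of_le_of_lt (limsup_le_of_le (by isBoundedDefault) hev2) ?_
  exact_mod_cast (by norm_num : (-1 : ℝ) < 0)
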